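/- Let σ be a finite positive Borel measure on ℝ such that σ([ω−r, ω+r]) ≤ C r^γ for all ω ∈ ℝ and all 0 < r ≤ r₀, for some constants C > 0, γ ∈ (0,1], r₀ > 0. Then there exists a constant C' > 0 such that for every y ∈ ℝ and every R ≥ 1, ∫_{y−R}^{y+R} |σ̂(ζ)|² dζ ≤ C' R^{1−γ}, where σ̂(ζ) = ∫ e^{2πiωζ} dσ(ω). -/

import Mathlib

open MeasureTheory Real Set

noncomputable def Kc : ℝ := ∑' k : ℕ, ((k : ℝ) + 1) * Real.exp (-(π ^ 2) * (k : ℝ) ^ 2)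

lemma summable_Kc : Summable (fun k : ℕ => ((k : ℝ) + 1) * Real.exp (-(π ^ 2) * (k : ℝ) ^ 2)) := by
  have hq : ‖Real.exp (-1)‖ < 1 := by
    rw [Real.norm_eq_abs, abs_of_pos (Real.exp_pos _)]
    exact Real.exp_lt_one_iff.mpr (by norm_num)
  have h1 : Summable (fun k : ℕ => ((k : ℝ) + 1) * Real.exp (-1) ^ k) := by
    have := (summable_pow_mul_geometric_of_norm_lt_one 1 hq)
    have h2 : Summable (fun k : ℕ => Real.exp (-1) ^ k) := summable_geometric_of_norm_lt_one hq
    simpa [add_mul, pow_one] using this.add h2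
  refine Summable.of_nonneg_of_le (fun k => ?_) (fun k => ?_) h1
  · positivity
  · have hk : -(π ^ 2) * (k : ℝ) ^ 2 ≤ -(k : ℝ) := by
      have h3 : (3:ℝ) < π := Real.pi_gt_three
      have : (k:ℝ) ≤ (k:ℝ)^2 := by
        rcases Nat.eq_zero_or_pos k with h | h
        · simp [h]
        · have : (1:ℝ) ≤ (k:ℝ) := by exact_mod_cast h
          nlinarith
      have hπ : (1:ℝ) ≤ π ^ 2 := by nlinarith
      nlinarith [sq_nonneg ((k:ℝ))]
    have : Real.exp (-(π ^ 2) * (k : ℝ) ^ 2) ≤ Real.exp (-(k:ℝ)) := Real.exp_le_exp.mpr hk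
    have he : Real.exp (-(1:ℝ)) ^ k = Real.exp (-(k:ℝ)) := by
      rw [← Real.exp_nat_mul]; norm_num
    rw [he]
    have : (0:ℝ) ≤ (k:ℝ) + 1 := by positivity
    nlinarith [Real.exp_pos (-(π^2) * (k:ℝ)^2)]

lemma Kc_pos : 0 < Kc :=
  Summable.tsum_pos summable_Kc (fun k => by positivity) 0 (by positivity)

lemma stepC (σ : Measure ℝ) [IsFiniteMeasure σ] {C₂ γ : ℝ} (hC₂ : 0 < C₂)
    (hγ0 : 0 < γ) (hγ1 : γ ≤ 1)
    (hreg : ∀ ω r : ℝ, 0 < r → σ (Icc (ω - r) (ω + r)) ≤ ENNReal.ofReal (C₂ * r ^ γ))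
    (R ω' : ℝ) (hR : 1 ≤ R) :
    ∫ ω, Real.exp (-(π ^ 2 * R ^ 2) * (ω - ω') ^ 2) ∂σ ≤ C₂ * Kc / R ^ γ := by
  have hR0 : (0:ℝ) < R := lt_of_lt_of_le one_pos hR
  have hRγ : (0:ℝ) < R ^ γ := Real.rpow_pos_of_pos hR0 γ
  set g : ℝ → ℝ := fun ω => Real.exp (-(π ^ 2 * R ^ 2) * (ω - ω') ^ 2) with hg
  have hgm : Measurable g := by fun_prop
  rw [integral_eq_lintegral_of_nonneg_ae (Filter.Eventually.of_forall fun ω => (Real.exp_pos _).le)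
    hgm.aestronglyMeasurable]
  refine ENNReal.toReal_le_of_le_ofReal (by have := Kc_pos; positivity) ?_
  -- the ENNReal-valued dominating series
  set f : ℕ → ℝ → ENNReal := fun k ω =>
    (Icc (ω' - ((k:ℝ)+1)/R) (ω' + ((k:ℝ)+1)/R)).indicator
      (fun _ => ENNReal.ofReal (Real.exp (-(π ^ 2) * (k:ℝ) ^ 2))) ω with hf
  have hpt : ∀ ω, ENNReal.ofReal (g ω) ≤ ∑' k, f k ω := by
    intro ω
    set k := ⌊R * |ω - ω'|⌋₊ with hk
    have hnn : 0 ≤ R * |ω - ω'| := by positivity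
    have h1 : (k:ℝ) ≤ R * |ω - ω'| := Nat.floor_le hnn
    have h2 : R * |ω - ω'| < (k:ℝ) + 1 := Nat.lt_floor_add_one _
    have hmem : ω ∈ Icc (ω' - ((k:ℝ)+1)/R) (ω' + ((k:ℝ)+1)/R) := by
      have habs : |ω - ω'| ≤ ((k:ℝ)+1)/R := by
        rw [le_div_iff₀ hR0]; nlinarith
      rw [abs_le] at habs
      constructor <;> [linarith [habs.1]; linarith [habs.2]]
    have hle : g ω ≤ Real.exp (-(π ^ 2) * (k:ℝ) ^ 2) := by
      apply Real.exp_le_exp.mpr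
      have : (k:ℝ)^2 ≤ (R * |ω - ω'|)^2 := by nlinarith
      have h3 : (R * |ω - ω'|)^2 = R^2 * (ω - ω')^2 := by
        rw [mul_pow, sq_abs]
      nlinarith [Real.pi_pos, sq_nonneg π]
    calc ENNReal.ofReal (g ω) ≤ ENNReal.ofReal (Real.exp (-(π ^ 2) * (k:ℝ) ^ 2)) :=
          ENNReal.ofReal_le_ofReal hle
      _ = f k ω := by rw [hf]; simp [Set.indicator_of_mem hmem]
      _ ≤ ∑' j, f j ω := ENNReal.le_tsum k
  calc ∫⁻ ω, ENNReal.ofReal (g ω) ∂σ ≤ ∫⁻ ω, ∑' k, f k ω ∂σ := lintegral_mono hpt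
    _ = ∑' k, ∫⁻ ω, f k ω ∂σ := by
        refine lintegral_tsum fun k => ?_
        exact (measurable_const.indicator measurableSet_Icc).aemeasurable
    _ ≤ ∑' k : ℕ, ENNReal.ofReal (C₂ / R ^ γ * (((k:ℝ)+1) * Real.exp (-(π ^ 2) * (k:ℝ) ^ 2))) := by
        refine ENNReal.tsum_le_tsum fun k => ?_
        rw [hf]
        rw [lintegral_indicator_const measurableSet_Icc]
        have hr : (0:ℝ) < ((k:ℝ)+1)/R := by positivity
        have hσ := hreg ω' (((k:ℝ)+1)/R) hr
        calc ENNReal.ofReal (Real.exp (-(π ^ 2) * (k:ℝ) ^ 2)) * σ (Icc (ω' - ((k:ℝ)+1)/R) (ω' + ((k:ℝ)+1)/R))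
            ≤ ENNReal.ofReal (Real.exp (-(π ^ 2) * (k:ℝ) ^ 2)) * ENNReal.ofReal (C₂ * (((k:ℝ)+1)/R) ^ γ) :=
              mul_le_mul_right hσ _
          _ = ENNReal.ofReal (Real.exp (-(π ^ 2) * (k:ℝ) ^ 2) * (C₂ * (((k:ℝ)+1)/R) ^ γ)) := by
              rw [← ENNReal.ofReal_mul (Real.exp_pos _).le]
          _ ≤ ENNReal.ofReal (C₂ / R ^ γ * (((k:ℝ)+1) * Real.exp (-(π ^ 2) * (k:ℝ) ^ 2))) := by
              apply ENNReal.ofReal_le_ofReal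
              have hpow : (((k:ℝ)+1)/R) ^ γ ≤ ((k:ℝ)+1) / R ^ γ := by
                rw [Real.div_rpow (by positivity) hR0.le]
                have h4 : ((k:ℝ)+1) ^ γ ≤ ((k:ℝ)+1) := by
                  calc ((k:ℝ)+1) ^ γ ≤ ((k:ℝ)+1) ^ (1:ℝ) :=
                        Real.rpow_le_rpow_of_exponent_le (by have := Nat.cast_nonneg (α:=ℝ) k; linarith) hγ1
                    _ = (k:ℝ)+1 := Real.rpow_one _
                exact div_le_div_of_nonneg_right h4 hRγ.le |>.trans_eq rfl
              calc Real.exp (-(π ^ 2) * (k:ℝ) ^ 2) * (C₂ * (((k:ℝ)+1)/R) ^ γ)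
                  ≤ Real.exp (-(π ^ 2) * (k:ℝ) ^ 2) * (C₂ * (((k:ℝ)+1) / R ^ γ)) :=
                    mul_le_mul_of_nonneg_left (mul_le_mul_of_nonneg_left hpow hC₂.le)
                      (Real.exp_pos _).le
                _ = C₂ / R ^ γ * (((k:ℝ)+1) * Real.exp (-(π ^ 2) * (k:ℝ) ^ 2)) := by ring
    _ = ENNReal.ofReal (C₂ / R ^ γ) * ∑' k : ℕ, ENNReal.ofReal (((k:ℝ)+1) * Real.exp (-(π ^ 2) * (k:ℝ) ^ 2)) := by
        rw [← ENNReal.tsum_mul_left]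
        congr 1; ext k
        rw [← ENNReal.ofReal_mul (by positivity)]
    _ = ENNReal.ofReal (C₂ / R ^ γ) * ENNReal.ofReal Kc := by
        rw [← ENNReal.ofReal_tsum_of_nonneg (fun k => by positivity) summable_Kc, Kc]
    _ ≤ ENNReal.ofReal (C₂ * Kc / R ^ γ) := by
        rw [← ENNReal.ofReal_mul (by positivity)]
        apply ENNReal.ofReal_le_ofReal
        rw [div_mul_eq_mul_div]

lemma reg2 (σ : Measure ℝ) [IsFiniteMeasure σ] {C γ r₀ : ℝ} (hC : 0 < C)
    (hγ0 : 0 < γ) (hr₀ : 0 < r₀)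
    (hreg : ∀ ω : ℝ, ∀ r : ℝ, 0 < r → r ≤ r₀ →
      σ (Icc (ω - r) (ω + r)) ≤ ENNReal.ofReal (C * r ^ γ)) :
    ∃ C₂ : ℝ, 0 < C₂ ∧ ∀ ω r : ℝ, 0 < r →
      σ (Icc (ω - r) (ω + r)) ≤ ENNReal.ofReal (C₂ * r ^ γ) := by
  set M : ℝ := (σ univ).toReal with hM
  have hM0 : 0 ≤ M := ENNReal.toReal_nonneg
  refine ⟨C + M / r₀ ^ γ + 1, by positivity, fun ω r hr => ?_⟩
  have hrγ : (0:ℝ) < r ^ γ := Real.rpow_pos_of_pos hr γ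
  have hr₀γ : (0:ℝ) < r₀ ^ γ := Real.rpow_pos_of_pos hr₀ γ
  rcases le_or_gt r r₀ with h | h
  · refine (hreg ω r hr h).trans (ENNReal.ofReal_le_ofReal ?_)
    have : (0:ℝ) ≤ (M / r₀ ^ γ + 1) * r ^ γ := by positivity
    nlinarith
  · have h1 : σ (Icc (ω - r) (ω + r)) ≤ σ univ := measure_mono (subset_univ _)
    have h2 : σ univ = ENNReal.ofReal M := (ENNReal.ofReal_toReal (measure_ne_top σ _)).symm
    refine h1.trans (h2.le.trans (ENNReal.ofReal_le_ofReal ?_))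
    have h3 : r₀ ^ γ ≤ r ^ γ := Real.rpow_le_rpow hr₀.le h.le hγ0.le
    have h4 : M = (M / r₀ ^ γ) * r₀ ^ γ := by field_simp
    have h5 : (M / r₀ ^ γ) * r₀ ^ γ ≤ (M / r₀ ^ γ) * r ^ γ :=
      mul_le_mul_of_nonneg_left h3 (by positivity)
    nlinarith

lemma norm_exp_eq_one {z : ℂ} (h : z.re = 0) : ‖Complex.exp z‖ = 1 := by
  rw [Complex.norm_exp, h, Real.exp_zero]

lemma re_char (c : ℂ) (hc : c.re = 0) (a b : ℝ) : (c * a * b).re = 0 := by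
  simp [Complex.mul_re, hc]

lemma re_char2 : ∀ a b : ℝ, ((2 * π * Complex.I : ℂ) * a * b).re = 0 := by
  intro a b
  exact re_char _ (by simp) a b

lemma gaussInner (R y s : ℝ) (hR0 : 0 < R) :
    ∫ ζ : ℝ, (Complex.exp (2 * π * Complex.I * s * ζ)).re *
        Real.exp (-(1 / R ^ 2) * (ζ - y) ^ 2)
      ≤ Real.sqrt π * R * Real.exp (-(π ^ 2 * R ^ 2) * s ^ 2) := by
  have hb0 : (0:ℝ) < 1 / R ^ 2 := by positivity
  set b : ℂ := ((1 / R ^ 2 : ℝ) : ℂ) with hbdef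
  have hb : 0 < b.re := by rw [hbdef, Complex.ofReal_re]; exact hb0
  have hchar : Continuous fun ζ : ℝ => Complex.exp (2 * π * Complex.I * s * ζ) :=
    Complex.continuous_exp.comp (continuous_const.mul Complex.continuous_ofReal)
  set w : ℝ → ℂ := fun ζ =>
    (Real.exp (-(1 / R ^ 2) * (ζ - y) ^ 2) : ℂ) * Complex.exp (2 * π * Complex.I * s * ζ) with hw
  have hGint : Integrable (fun ζ : ℝ => Real.exp (-(1 / R ^ 2) * (ζ - y) ^ 2)) :=
    (integrable_exp_neg_mul_sq hb0).comp_sub_right y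
  have hwint : Integrable w := by
    have h := hGint.ofReal.bdd_mul hchar.aestronglyMeasurable
      (Filter.Eventually.of_forall fun ζ => le_of_eq (norm_exp_eq_one (re_char2 s ζ)))
    exact h.congr (Filter.Eventually.of_forall fun ζ => mul_comm _ _)
  have hre : ∀ ζ : ℝ, (Complex.exp (2 * π * Complex.I * s * ζ)).re *
      Real.exp (-(1 / R ^ 2) * (ζ - y) ^ 2) = (w ζ).re := by
    intro ζ; rw [hw]; rw [Complex.re_ofReal_mul]; ring
  simp_rw [hre]
  have h1 : ∫ ζ : ℝ, (w ζ).re = (∫ ζ : ℝ, w ζ).re := by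
    simpa using integral_re hwint
  rw [h1]
  refine (Complex.re_le_norm _).trans ?_
  -- compute the integral
  have h2 : ∫ ζ : ℝ, w ζ = ∫ x : ℝ, w (x + y) := (integral_add_right_eq_self w y).symm
  have h3 : ∀ x : ℝ, w (x + y) = Complex.exp (2 * π * Complex.I * s * y) *
      (Complex.exp (Complex.I * ((2 * π * s : ℝ) : ℂ) * x) * Complex.exp (-b * x ^ 2)) := by
    intro x
    rw [hw]
    simp only [Complex.ofReal_exp]
    rw [← Complex.exp_add, ← Complex.exp_add, ← Complex.exp_add]
    congr 1
    rw [hbdef]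
    push_cast
    ring
  rw [h2]
  simp_rw [h3]
  rw [integral_const_mul, fourierIntegral_gaussian hb ((2 * π * s : ℝ) : ℂ)]
  rw [norm_mul, norm_mul, norm_exp_eq_one (re_char2 s y)]
  have h4 : (↑π / b) = ((π * R ^ 2 : ℝ) : ℂ) := by
    rw [hbdef]; push_cast; field_simp
  have h5 : (-((2 * π * s : ℝ) : ℂ) ^ 2 / (4 * b)) = ((-(π ^ 2 * R ^ 2) * s ^ 2 : ℝ) : ℂ) := by
    rw [hbdef]; push_cast; field_simp; ring
  rw [h4, h5]
  have h6 : ((π * R ^ 2 : ℝ) : ℂ) ^ (1 / 2 : ℂ) = (((π * R ^ 2 : ℝ) ^ (1 / 2 : ℝ) : ℝ) : ℂ) := by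
    rw [Complex.ofReal_cpow (by positivity)]
    norm_num
  rw [h6]
  have h7 : ‖(((π * R ^ 2 : ℝ) ^ (1 / 2 : ℝ) : ℝ) : ℂ)‖ = Real.sqrt π * R := by
    rw [Complex.norm_real, Real.norm_eq_abs, ← Real.sqrt_eq_rpow,
      abs_of_nonneg (Real.sqrt_nonneg _), Real.sqrt_mul Real.pi_pos.le,
      Real.sqrt_sq hR0.le]
  rw [h7]
  have h8 : ‖Complex.exp ((-(π ^ 2 * R ^ 2) * s ^ 2 : ℝ) : ℂ)‖ =
      Real.exp (-(π ^ 2 * R ^ 2) * s ^ 2) := by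
    rw [Complex.norm_exp, Complex.ofReal_re]
  rw [one_mul, h8]

lemma Fcont (σ : Measure ℝ) [IsFiniteMeasure σ] :
    Continuous fun ζ : ℝ => ∫ ω : ℝ, Complex.exp (2 * π * Complex.I * ω * ζ) ∂σ := by
  refine continuous_of_dominated (bound := fun _ => (1:ℝ))
    (fun ζ => (Complex.continuous_exp.comp
      ((continuous_const.mul Complex.continuous_ofReal).mul continuous_const)).aestronglyMeasurable)
    (fun ζ => Filter.Eventually.of_forall fun ω => le_of_eq (norm_exp_eq_one (re_char2 ω ζ)))
    (integrable_const 1) (Filter.Eventually.of_forall fun ω => ?_)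
  exact Complex.continuous_exp.comp (continuous_const.mul Complex.continuous_ofReal)

lemma Fbound (σ : Measure ℝ) [IsFiniteMeasure σ] (ζ : ℝ) :
    ‖∫ ω : ℝ, Complex.exp (2 * π * Complex.I * ω * ζ) ∂σ‖ ≤ (σ univ).toReal := by
  calc ‖∫ ω : ℝ, Complex.exp (2 * π * Complex.I * ω * ζ) ∂σ‖
      ≤ ∫ ω, ‖Complex.exp (2 * π * Complex.I * ω * ζ)‖ ∂σ := norm_integral_le_integral_norm _
    _ = ∫ _ω, (1:ℝ) ∂σ := integral_congr_ae
        (Filter.Eventually.of_forall fun ω => norm_exp_eq_one (re_char2 ω ζ))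
    _ = (σ univ).toReal := by simp [measureReal_def]

lemma Gint (y R : ℝ) (hR0 : 0 < R) :
    Integrable (fun ζ : ℝ => Real.exp (-(1 / R ^ 2) * (ζ - y) ^ 2)) :=
  (integrable_exp_neg_mul_sq (by positivity)).comp_sub_right y

lemma F2Gint (σ : Measure ℝ) [IsFiniteMeasure σ] (y R : ℝ) (hR0 : 0 < R) :
    Integrable (fun ζ : ℝ => ‖∫ ω : ℝ, Complex.exp (2 * π * Complex.I * ω * ζ) ∂σ‖ ^ 2 *
      Real.exp (-(1 / R ^ 2) * (ζ - y) ^ 2)) := by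
  refine (Gint y R hR0).bdd_mul ((Fcont σ).norm.pow 2).aestronglyMeasurable
    (c := (σ univ).toReal ^ 2) (Filter.Eventually.of_forall fun ζ => ?_)
  rw [Real.norm_eq_abs, abs_of_nonneg (by positivity)]
  exact pow_le_pow_left₀ (norm_nonneg _) (Fbound σ ζ) 2

lemma stepA_lemma (σ : Measure ℝ) [IsFiniteMeasure σ] (y R : ℝ) (hR : 1 ≤ R) :
    ∫ ζ in Icc (y - R) (y + R), ‖∫ ω : ℝ, Complex.exp (2 * π * Complex.I * ω * ζ) ∂σ‖ ^ 2
      ≤ Real.exp 1 * ∫ ζ : ℝ, ‖∫ ω : ℝ, Complex.exp (2 * π * Complex.I * ω * ζ) ∂σ‖ ^ 2 *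
          Real.exp (-(1 / R ^ 2) * (ζ - y) ^ 2) := by
  have hR0 : (0:ℝ) < R := lt_of_lt_of_le one_pos hR
  have hF2cont : Continuous fun ζ : ℝ =>
      ‖∫ ω : ℝ, Complex.exp (2 * π * Complex.I * ω * ζ) ∂σ‖ ^ 2 := (Fcont σ).norm.pow 2
  have hGcont : Continuous fun ζ : ℝ => Real.exp (-(1 / R ^ 2) * (ζ - y) ^ 2) := by fun_prop
  have h1 : ∫ ζ in Icc (y - R) (y + R),
        ‖∫ ω : ℝ, Complex.exp (2 * π * Complex.I * ω * ζ) ∂σ‖ ^ 2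
      ≤ ∫ ζ in Icc (y - R) (y + R), Real.exp 1 *
        (‖∫ ω : ℝ, Complex.exp (2 * π * Complex.I * ω * ζ) ∂σ‖ ^ 2 *
          Real.exp (-(1 / R ^ 2) * (ζ - y) ^ 2)) := by
    refine setIntegral_mono_on hF2cont.integrableOn_Icc
      ((continuous_const.mul (hF2cont.mul hGcont)).integrableOn_Icc)
      measurableSet_Icc (fun ζ hζ => ?_)
    obtain ⟨hζ1, hζ2⟩ := hζ
    have h2 : (ζ - y) ^ 2 ≤ R ^ 2 := by nlinarith
    have h3 : Real.exp (-1) ≤ Real.exp (-(1 / R ^ 2) * (ζ - y) ^ 2) := by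
      apply Real.exp_le_exp.mpr
      have h2' : (1 / R ^ 2) * (ζ - y) ^ 2 ≤ (1 / R ^ 2) * R ^ 2 :=
        mul_le_mul_of_nonneg_left h2 (by positivity)
      have h2'' : (1 / R ^ 2) * R ^ 2 = 1 := by field_simp
      nlinarith
    have h4 : 1 ≤ Real.exp 1 * Real.exp (-(1 / R ^ 2) * (ζ - y) ^ 2) := by
      have h5 := mul_le_mul_of_nonneg_left h3 (Real.exp_pos 1).le
      have h6 : Real.exp 1 * Real.exp (-1) = 1 := by
        rw [← Real.exp_add]; norm_num
      linarith
    nlinarith [mul_le_mul_of_nonneg_left h4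
      (sq_nonneg ‖∫ ω : ℝ, Complex.exp (2 * π * Complex.I * ω * ζ) ∂σ‖),
      sq_nonneg ‖∫ ω : ℝ, Complex.exp (2 * π * Complex.I * ω * ζ) ∂σ‖]
  rw [integral_const_mul] at h1
  refine h1.trans (mul_le_mul_of_nonneg_left ?_ (Real.exp_pos 1).le)
  exact setIntegral_le_integral (F2Gint σ y R hR0)
    (Filter.Eventually.of_forall fun ζ => by positivity)

lemma ptB_lemma (σ : Measure ℝ) [IsFiniteMeasure σ] (y R ζ : ℝ) :
    ‖∫ ω : ℝ, Complex.exp (2 * π * Complex.I * ω * ζ) ∂σ‖ ^ 2 *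
        Real.exp (-(1 / R ^ 2) * (ζ - y) ^ 2)
      = ∫ p : ℝ × ℝ, (Complex.exp (2 * π * Complex.I * ((p.1 - p.2 : ℝ) : ℂ) * (ζ : ℂ))).re *
          Real.exp (-(1 / R ^ 2) * (ζ - y) ^ 2) ∂(σ.prod σ) := by
  have hEcont : Continuous fun p : ℝ × ℝ =>
      Complex.exp (2 * π * Complex.I * ((p.1 - p.2 : ℝ) : ℂ) * (ζ : ℂ)) :=
    Complex.continuous_exp.comp ((continuous_const.mul
      (Complex.continuous_ofReal.comp (continuous_fst.sub continuous_snd))).mul continuous_const)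
  have hEint : Integrable (fun p : ℝ × ℝ =>
      Complex.exp (2 * π * Complex.I * ((p.1 - p.2 : ℝ) : ℂ) * (ζ : ℂ))) (σ.prod σ) :=
    Integrable.mono' (integrable_const 1) hEcont.aestronglyMeasurable
      (Filter.Eventually.of_forall fun p => le_of_eq (norm_exp_eq_one (re_char2 _ ζ)))
  have hconj : (starRingEnd ℂ) (∫ ω : ℝ, Complex.exp (2 * π * Complex.I * ω * ζ) ∂σ) =
      ∫ ω : ℝ, Complex.exp (-(2 * π * Complex.I * ω * ζ)) ∂σ := by
    rw [← integral_conj]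
    apply integral_congr_ae (Filter.Eventually.of_forall fun ω => ?_)
    rw [← Complex.exp_conj]
    congr 1
    have key : (2 * ↑π * Complex.I * ↑ω * ↑ζ : ℂ) = ((2 * π * ω * ζ : ℝ) : ℂ) * Complex.I := by
      push_cast; ring
    rw [key, map_mul, Complex.conj_ofReal, Complex.conj_I]
    ring
  have hprod : (∫ ω : ℝ, Complex.exp (2 * π * Complex.I * ω * ζ) ∂σ) *
      (starRingEnd ℂ) (∫ ω : ℝ, Complex.exp (2 * π * Complex.I * ω * ζ) ∂σ) =
      ∫ p : ℝ × ℝ, Complex.exp (2 * π * Complex.I * ((p.1 - p.2 : ℝ) : ℂ) * (ζ : ℂ))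
        ∂(σ.prod σ) := by
    rw [hconj, ← integral_prod_mul]
    apply integral_congr_ae (Filter.Eventually.of_forall fun p => ?_)
    rw [← Complex.exp_add]
    congr 1
    push_cast
    ring
  have hsq : ‖∫ ω : ℝ, Complex.exp (2 * π * Complex.I * ω * ζ) ∂σ‖ ^ 2 =
      ((∫ ω : ℝ, Complex.exp (2 * π * Complex.I * ω * ζ) ∂σ) *
        (starRingEnd ℂ) (∫ ω : ℝ, Complex.exp (2 * π * Complex.I * ω * ζ) ∂σ)).re := by
    rw [Complex.mul_conj, Complex.ofReal_re, ← Complex.sq_norm]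
  rw [hsq, hprod]
  have hre3 : (∫ p : ℝ × ℝ, Complex.exp (2 * π * Complex.I * ((p.1 - p.2 : ℝ) : ℂ) * (ζ : ℂ))
      ∂(σ.prod σ)).re = ∫ p : ℝ × ℝ,
        (Complex.exp (2 * π * Complex.I * ((p.1 - p.2 : ℝ) : ℂ) * (ζ : ℂ))).re ∂(σ.prod σ) := by
    simpa using (integral_re hEint).symm
  rw [hre3, ← integral_mul_const]

lemma Hint_lemma (σ : Measure ℝ) [IsFiniteMeasure σ] (y R : ℝ) (hR0 : 0 < R) :
    Integrable (Function.uncurry fun (ζ : ℝ) (p : ℝ × ℝ) =>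
        (Complex.exp (2 * π * Complex.I * ((p.1 - p.2 : ℝ) : ℂ) * (ζ : ℂ))).re *
          Real.exp (-(1 / R ^ 2) * (ζ - y) ^ 2))
      (volume.prod (σ.prod σ)) := by
  have hbdd : Integrable (fun z : ℝ × (ℝ × ℝ) =>
      Real.exp (-(1 / R ^ 2) * (z.1 - y) ^ 2) * 1) (volume.prod (σ.prod σ)) :=
    (Gint y R hR0).mul_prod (integrable_const 1)
  have hbdd' : Integrable (fun z : ℝ × (ℝ × ℝ) =>
      Real.exp (-(1 / R ^ 2) * (z.1 - y) ^ 2)) (volume.prod (σ.prod σ)) :=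
    hbdd.congr (Filter.Eventually.of_forall fun z => mul_one _)
  refine Integrable.mono' hbdd' ?_ (Filter.Eventually.of_forall fun z => ?_)
  · apply Continuous.aestronglyMeasurable
    apply Continuous.mul
    · exact Complex.continuous_re.comp (Complex.continuous_exp.comp
        ((continuous_const.mul (Complex.continuous_ofReal.comp
          ((continuous_fst.comp continuous_snd).sub (continuous_snd.comp continuous_snd)))).mul
          (Complex.continuous_ofReal.comp continuous_fst)))
    · have : Continuous fun ζ : ℝ => Real.exp (-(1 / R ^ 2) * (ζ - y) ^ 2) := by fun_prop
      exact this.comp continuous_fst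
  · rw [Function.uncurry]
    rw [Real.norm_eq_abs, abs_mul, abs_of_pos (Real.exp_pos _)]
    have h6 := Complex.abs_re_le_norm
      (Complex.exp (2 * π * Complex.I * ((z.2.1 - z.2.2 : ℝ) : ℂ) * (z.1 : ℂ)))
    have h7 : ‖Complex.exp (2 * π * Complex.I * ((z.2.1 - z.2.2 : ℝ) : ℂ) * (z.1 : ℂ))‖ = 1 :=
      norm_exp_eq_one (re_char2 _ _)
    rw [h7] at h6
    have h8 := mul_le_mul_of_nonneg_right h6 (Real.exp_pos (-(1 / R ^ 2) * (z.1 - y) ^ 2)).le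
    rw [one_mul] at h8
    exact h8

lemma phi_int (σ : Measure ℝ) [IsFiniteMeasure σ] (R : ℝ) :
    Integrable (fun p : ℝ × ℝ => Real.exp (-(π ^ 2 * R ^ 2) * (p.1 - p.2) ^ 2)) (σ.prod σ) := by
  refine Integrable.mono' (integrable_const 1)
    (Continuous.aestronglyMeasurable (by fun_prop)) (Filter.Eventually.of_forall fun p => ?_)
  rw [Real.norm_eq_abs, abs_of_pos (Real.exp_pos _)]
  refine Real.exp_le_one_iff.mpr ?_
  have : (0:ℝ) ≤ (π ^ 2 * R ^ 2) * (p.1 - p.2) ^ 2 := by positivity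
  linarith

lemma stepB_lemma (σ : Measure ℝ) [IsFiniteMeasure σ] (y R : ℝ) (hR : 1 ≤ R) :
    ∫ ζ : ℝ, ‖∫ ω : ℝ, Complex.exp (2 * π * Complex.I * ω * ζ) ∂σ‖ ^ 2 *
        Real.exp (-(1 / R ^ 2) * (ζ - y) ^ 2)
      ≤ Real.sqrt π * R *
        ∫ p : ℝ × ℝ, Real.exp (-(π ^ 2 * R ^ 2) * (p.1 - p.2) ^ 2) ∂(σ.prod σ) := by
  have hR0 : (0:ℝ) < R := lt_of_lt_of_le one_pos hR
  have hHint := Hint_lemma σ y R hR0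
  have h1 : (fun ζ : ℝ => ‖∫ ω : ℝ, Complex.exp (2 * π * Complex.I * ω * ζ) ∂σ‖ ^ 2 *
      Real.exp (-(1 / R ^ 2) * (ζ - y) ^ 2)) = fun ζ : ℝ =>
        ∫ p : ℝ × ℝ, (Complex.exp (2 * π * Complex.I * ((p.1 - p.2 : ℝ) : ℂ) * (ζ : ℂ))).re *
          Real.exp (-(1 / R ^ 2) * (ζ - y) ^ 2) ∂(σ.prod σ) :=
    funext fun ζ => ptB_lemma σ y R ζ
  rw [h1, integral_integral_swap hHint, ← integral_const_mul]
  refine integral_mono hHint.integral_prod_right ((phi_int σ R).const_mul _) fun p => ?_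
  exact gaussInner R y (p.1 - p.2) hR0

lemma stepCC_lemma (σ : Measure ℝ) [IsFiniteMeasure σ] {C₂ γ : ℝ} (hC₂ : 0 < C₂)
    (hγ0 : 0 < γ) (hγ1 : γ ≤ 1)
    (hreg2 : ∀ ω r : ℝ, 0 < r → σ (Icc (ω - r) (ω + r)) ≤ ENNReal.ofReal (C₂ * r ^ γ))
    (R : ℝ) (hR : 1 ≤ R) :
    ∫ p : ℝ × ℝ, Real.exp (-(π ^ 2 * R ^ 2) * (p.1 - p.2) ^ 2) ∂(σ.prod σ)
      ≤ (σ univ).toReal * (C₂ * Kc / R ^ γ) := by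
  rw [integral_prod _ (phi_int σ R)]
  have hin : ∀ x : ℝ, ∫ yy : ℝ, Real.exp (-(π ^ 2 * R ^ 2) * (x - yy) ^ 2) ∂σ
      ≤ C₂ * Kc / R ^ γ := by
    intro x
    have h2 : (fun yy : ℝ => Real.exp (-(π ^ 2 * R ^ 2) * (x - yy) ^ 2)) = fun yy : ℝ =>
        Real.exp (-(π ^ 2 * R ^ 2) * (yy - x) ^ 2) := by
      funext yy; congr 2; ring
    rw [h2]
    exact stepC σ hC₂ hγ0 hγ1 hreg2 R x hR
  calc ∫ x : ℝ, (∫ yy : ℝ, Real.exp (-(π ^ 2 * R ^ 2) * (x - yy) ^ 2) ∂σ) ∂σ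
      ≤ ∫ _x : ℝ, (C₂ * Kc / R ^ γ) ∂σ :=
        integral_mono (phi_int σ R).integral_prod_left (integrable_const _) hin
    _ = (σ univ).toReal * (C₂ * Kc / R ^ γ) := by rw [integral_const, smul_eq_mul, measureReal_def]

/-- Strichartz-type estimate: uniform local Hölder regularity of a finite measure implies
averaged decay of the square of its Fourier transform on intervals of length `2R`. -/
theorem stmt1 (σ : Measure ℝ) [IsFiniteMeasure σ]
    (C γ r₀ : ℝ) (hC : 0 < C) (hγ : 0 < γ ∧ γ ≤ 1) (hr₀ : 0 < r₀)
    (hreg : ∀ ω : ℝ, ∀ r : ℝ, 0 < r → r ≤ r₀ →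
      σ (Icc (ω - r) (ω + r)) ≤ ENNReal.ofReal (C * r ^ γ)) :
    ∃ C' : ℝ, 0 < C' ∧ ∀ y R : ℝ, 1 ≤ R →
      ∫ ζ in Icc (y - R) (y + R),
        ‖∫ ω : ℝ, Complex.exp (2 * Real.pi * Complex.I * ω * ζ) ∂σ‖ ^ 2
        ≤ C' * R ^ (1 - γ) := by
  obtain ⟨hγ0, hγ1⟩ := hγ
  obtain ⟨C₂, hC₂, hreg2⟩ := reg2 σ hC hγ0 hr₀ hreg
  have hKc := Kc_pos
  have hM0 : 0 ≤ (σ univ).toReal := ENNReal.toReal_nonneg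
  refine ⟨Real.exp 1 * (Real.sqrt π * ((σ univ).toReal * (C₂ * Kc))) + 1, by positivity,
    fun y R hR => ?_⟩
  have hR0 : (0:ℝ) < R := lt_of_lt_of_le one_pos hR
  have hRγ : (0:ℝ) < R ^ γ := Real.rpow_pos_of_pos hR0 γ
  have hchain : ∫ ζ in Icc (y - R) (y + R),
      ‖∫ ω : ℝ, Complex.exp (2 * π * Complex.I * ω * ζ) ∂σ‖ ^ 2
      ≤ Real.exp 1 * (Real.sqrt π * R * ((σ univ).toReal * (C₂ * Kc / R ^ γ))) := by
    refine (stepA_lemma σ y R hR).trans (mul_le_mul_of_nonneg_left ?_ (Real.exp_pos 1).le)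
    refine (stepB_lemma σ y R hR).trans (mul_le_mul_of_nonneg_left ?_ (by positivity))
    exact stepCC_lemma σ hC₂ hγ0 hγ1 hreg2 R hR
  refine hchain.trans ?_
  have hpow : R ^ (1 - γ) = R / R ^ γ := by
    rw [Real.rpow_sub hR0, Real.rpow_one]
  have heq : Real.exp 1 * (Real.sqrt π * R * ((σ univ).toReal * (C₂ * Kc / R ^ γ)))
      = Real.exp 1 * (Real.sqrt π * ((σ univ).toReal * (C₂ * Kc))) * R ^ (1 - γ) := by
    rw [hpow]
    field_simp
  rw [heq]
  have hRpow0 : (0:ℝ) ≤ R ^ (1 - γ) := Real.rpow_nonneg hR0.le _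
  nlinarith
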